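/- Entropy decomposition for Theorem 5's upload cost: with S ~ Uniform(B_{w,M}), m ~ Uniform([M]) independent of S, Q₁ = S, and Q₂ = S + e_m, the sum H(Q₁) + H(Q₂) = log₂ C(M,w) + y(w,M), where y(w,M) = log₂ C(M,w) + log₂ M − ((M−w)/M) log₂(w+1) − (w/M) log₂(M−w+1). Equivalently, H(Q₂) = log₂ M + log₂ C(M,w) − ((M−w)/M) log₂(w+1) − (w/M) log₂(M−w+1). -/

import Mathlib

open Finset Real

/-- Hamming weight of a binary vector. -/
def wt {M : ℕ} (v : Fin M → Bool) : ℕ := (Finset.univ.filter fun i => v i = true).card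

/-- The set `B_{w,M}` of binary length-`M` vectors of Hamming weight `w`. -/
def Bw (M w : ℕ) : Finset (Fin M → Bool) := Finset.univ.filter fun v => wt v = w

/-- Flip coordinate `m` of the binary vector `v` (addition of `e_m` over GF(2)). -/
def flipAt {M : ℕ} (v : Fin M → Bool) (m : Fin M) : Fin M → Bool :=
  Function.update v m (!v m)

/-- Joint distribution of `(m, Q₂)` in the `(M,2)` Scheme 2 with
`S ~ Uniform(B_{w,M})`, `m ~ Uniform([M])` independent of `S`, and `Q₂ = S + e_m`:
`P(m, q) = (1/M)(1/|B_{w,M}|)` if flipping coordinate `m` of `q` lands in `B_{w,M}`,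
else `0`. -/
noncomputable def jointP (M w : ℕ) (m : Fin M) (q : Fin M → Bool) : ℝ :=
  (M : ℝ)⁻¹ * ((Bw M w).card : ℝ)⁻¹ * (if flipAt q m ∈ Bw M w then 1 else 0)

/-- Marginal distribution of the query `Q₂`. -/
noncomputable def margQ (M w : ℕ) (q : Fin M → Bool) : ℝ := ∑ m : Fin M, jointP M w m q

/-- Conditional entropy `H(m | Q₂ = q)` in bits. -/
noncomputable def condH (M w : ℕ) (q : Fin M → Bool) : ℝ :=
  -∑ m : Fin M, (jointP M w m q / margQ M w q) *
      Real.logb 2 (jointP M w m q / margQ M w q)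

lemma wt_flip_true {M : ℕ} (q : Fin M → Bool) (m : Fin M) (h : q m = true) :
    wt (flipAt q m) + 1 = wt q := by
  have hset : (Finset.univ.filter fun i => flipAt q m i = true)
      = (Finset.univ.filter fun i => q i = true).erase m := by
    ext i
    simp only [flipAt, Function.update_apply, h, Finset.mem_filter, Finset.mem_univ,
      true_and, Finset.mem_erase]
    by_cases hi : i = m <;> simp [hi, h]
  unfold wt
  rw [hset]
  exact Finset.card_erase_add_one (by simp [h])

lemma wt_flip_false {M : ℕ} (q : Fin M → Bool) (m : Fin M) (h : q m = false) :
    wt (flipAt q m) = wt q + 1 := by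
  have hset : (Finset.univ.filter fun i => flipAt q m i = true)
      = insert m (Finset.univ.filter fun i => q i = true) := by
    ext i
    simp only [flipAt, Function.update_apply, h, Finset.mem_filter, Finset.mem_univ,
      true_and, Finset.mem_insert]
    by_cases hi : i = m <;> simp [hi, h]
  unfold wt
  rw [hset, Finset.card_insert_of_notMem (by simp [h])]

lemma card_wt_eq (M k : ℕ) :
    (Finset.univ.filter fun v : Fin M → Bool => wt v = k).card = Nat.choose M k := by
  have hpc : (Finset.powersetCard k (Finset.univ : Finset (Fin M))).card = Nat.choose M k := by
    simp [Finset.card_powersetCard]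
  rw [← hpc]
  apply Finset.card_bij' (fun v _ => Finset.univ.filter fun j => v j = true)
    (fun s _ => fun i => decide (i ∈ s))
  · intro v hv; funext i; by_cases h : v i = true <;> simp [h]
  · intro s hs; ext i; simp
  · intro v hv
    simp only [Finset.mem_filter, Finset.mem_univ, true_and] at hv
    simp [Finset.mem_powersetCard, ← hv, wt]
  · intro s hs
    simp only [Finset.mem_powersetCard] at hs
    simp only [Finset.mem_filter, Finset.mem_univ, true_and, wt]
    rw [← hs.2]
    refine Finset.mem_filter.mpr ⟨Finset.mem_univ _, ?_⟩
    congr 1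
    ext i; simp

lemma card_Bw (M w : ℕ) : (Bw M w).card = Nat.choose M w := card_wt_eq M w

lemma margQ_eq (M w : ℕ) (q : Fin M → Bool) :
    margQ M w q = (M : ℝ)⁻¹ * ((Nat.choose M w : ℕ) : ℝ)⁻¹ *
      ((Finset.univ.filter fun m => flipAt q m ∈ Bw M w).card : ℝ) := by
  unfold margQ jointP
  rw [← Finset.mul_sum, Finset.sum_boole, card_Bw]

lemma countA {M w : ℕ} (q : Fin M → Bool) (h : wt q = w + 1) :
    (Finset.univ.filter fun m => flipAt q m ∈ Bw M w)
      = Finset.univ.filter fun m => q m = true := by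
  ext m
  simp only [Finset.mem_filter, Finset.mem_univ, true_and, Bw]
  constructor
  · intro hm
    by_contra hq
    have hq' : q m = false := by simpa using hq
    have := wt_flip_false q m hq'
    omega
  · intro hq
    have := wt_flip_true q m hq
    omega

lemma countB {M w : ℕ} (q : Fin M → Bool) (h : wt q + 1 = w) :
    (Finset.univ.filter fun m => flipAt q m ∈ Bw M w)
      = Finset.univ.filter fun m => q m = false := by
  ext m
  simp only [Finset.mem_filter, Finset.mem_univ, true_and, Bw]
  constructor
  · intro hm
    by_contra hq
    have hq' : q m = true := by simpa using hq
    have := wt_flip_true q m hq'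
    omega
  · intro hq
    have := wt_flip_false q m hq
    omega

lemma countZ {M w : ℕ} (q : Fin M → Bool) (hA : wt q ≠ w + 1) (hB : wt q + 1 ≠ w) :
    (Finset.univ.filter fun m => flipAt q m ∈ Bw M w) = ∅ := by
  ext m
  simp only [Finset.mem_filter, Finset.mem_univ, true_and, Bw, Finset.notMem_empty,
    iff_false]
  intro hm
  cases hq : q m with
  | true => have := wt_flip_true q m hq; omega
  | false => have := wt_flip_false q m hq; omega

lemma card_true {M : ℕ} (q : Fin M → Bool) :
    (Finset.univ.filter fun m => q m = true).card = wt q := rfl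

lemma card_false {M : ℕ} (q : Fin M → Bool) :
    (Finset.univ.filter fun m => q m = false).card + wt q = M := by
  have hco : (Finset.univ.filter fun m => q m = false)
      = Finset.univ.filter fun m => ¬ (q m = true) := by
    ext m; cases h : q m <;> simp [h]
  have h := Finset.card_filter_add_card_filter_not
    (s := (Finset.univ : Finset (Fin M))) (p := fun m => q m = true)
  rw [Finset.card_univ, Fintype.card_fin] at h
  rw [hco]
  unfold wt
  omega

lemma wt_le {M : ℕ} (q : Fin M → Bool) : wt q ≤ M := by
  have := card_false q; omega

lemma margA {M w : ℕ} (q : Fin M → Bool) (h : wt q = w + 1) :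
    margQ M w q = ((w : ℝ) + 1) / ((M : ℝ) * (Nat.choose M w : ℝ)) := by
  rw [margQ_eq, countA q h, card_true, h]
  push_cast
  ring

lemma margB {M w : ℕ} (q : Fin M → Bool) (h : wt q + 1 = w) :
    margQ M w q = ((M : ℝ) - (w : ℝ) + 1) / ((M : ℝ) * (Nat.choose M w : ℝ)) := by
  rw [margQ_eq, countB q h]
  have hc := card_false q
  have hwle := wt_le q
  have hcard : (Finset.univ.filter fun m => q m = false).card = M + 1 - w := by omega
  have hcast : (((Finset.univ.filter fun m => q m = false).card : ℕ) : ℝ)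
      = (M : ℝ) - (w : ℝ) + 1 := by
    rw [hcard]
    have hwM : w ≤ M + 1 := by omega
    push_cast [Nat.cast_sub hwM]
    ring
  rw [hcast]
  ring

lemma marg0 {M w : ℕ} (q : Fin M → Bool) (hA : wt q ≠ w + 1) (hB : wt q + 1 ≠ w) :
    margQ M w q = 0 := by
  rw [margQ_eq, countZ q hA hB]
  simp

lemma cardB_identity (M w : ℕ) (hw : w ≤ M) :
    (((Finset.univ.filter fun q : Fin M → Bool => wt q + 1 = w).card : ℕ) : ℝ)
        * ((M : ℝ) - (w : ℝ) + 1) = (w : ℝ) * (Nat.choose M w : ℝ) := by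
  cases w with
  | zero =>
      have : (Finset.univ.filter fun q : Fin M → Bool => wt q + 1 = 0) = ∅ := by
        ext q; simp
      rw [this]
      simp
  | succ v =>
      have hset : (Finset.univ.filter fun q : Fin M → Bool => wt q + 1 = v + 1)
          = Finset.univ.filter fun q : Fin M → Bool => wt q = v := by
        ext q; simp
      rw [hset, card_wt_eq]
      have hid := Nat.choose_succ_right_eq M v
      have hvM : v ≤ M := by omega
      have : ((M.choose (v + 1) * (v + 1) : ℕ) : ℝ) = ((M.choose v * (M - v) : ℕ) : ℝ) := by
        rw [hid]
      push_cast [Nat.cast_sub hvM] at this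
      push_cast
      linarith

lemma cardA_identity (M w : ℕ) (hw : w ≤ M) :
    ((Nat.choose M (w + 1) : ℕ) : ℝ) * ((w : ℝ) + 1)
      = ((M : ℝ) - (w : ℝ)) * (Nat.choose M w : ℝ) := by
  have hid := Nat.choose_succ_right_eq M w
  have : ((M.choose (w + 1) * (w + 1) : ℕ) : ℝ) = ((M.choose w * (M - w) : ℕ) : ℝ) := by
    rw [hid]
  push_cast [Nat.cast_sub hw] at this
  linarith

/-- Upload-cost entropy decomposition for Theorem 5: with `S ~ Uniform(B_{w,M})`,
`m ~ Uniform([M])` independent of `S`, `Q₁ = S` and `Q₂ = S + e_m`, we have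
`H(Q₁) = log₂ C(M,w)` and
`H(Q₂) = log₂ M + log₂ C(M,w) - ((M-w)/M) log₂(w+1) - (w/M) log₂(M-w+1)`, so that
`H(Q₁) + H(Q₂) = log₂ C(M,w) + y(w,M)`. -/
theorem scheme2_upload_entropy (M w : ℕ) (hM : 1 ≤ M) (hw : w ≤ M) :
    (-∑ q : Fin M → Bool, margQ M w q * Real.logb 2 (margQ M w q))
        = Real.logb 2 (M : ℝ) + Real.logb 2 (Nat.choose M w : ℝ)
            - (((M : ℝ) - (w : ℝ)) / (M : ℝ)) * Real.logb 2 ((w : ℝ) + 1)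
            - ((w : ℝ) / (M : ℝ)) * Real.logb 2 ((M : ℝ) - (w : ℝ) + 1) ∧
    Real.logb 2 (Nat.choose M w : ℝ)
        + (-∑ q : Fin M → Bool, margQ M w q * Real.logb 2 (margQ M w q))
      = Real.logb 2 (Nat.choose M w : ℝ)
          + (Real.logb 2 (Nat.choose M w : ℝ) + Real.logb 2 (M : ℝ)
              - (((M : ℝ) - (w : ℝ)) / (M : ℝ)) * Real.logb 2 ((w : ℝ) + 1)
              - ((w : ℝ) / (M : ℝ)) * Real.logb 2 ((M : ℝ) - (w : ℝ) + 1)) := by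
  have hM0 : (0 : ℝ) < (M : ℝ) := by exact_mod_cast hM
  have hC0 : (0 : ℝ) < (Nat.choose M w : ℝ) := by exact_mod_cast Nat.choose_pos hw
  have hwM : (w : ℝ) ≤ (M : ℝ) := by exact_mod_cast hw
  set C : ℝ := (Nat.choose M w : ℝ) with hCdef
  set a : ℝ := ((w : ℝ) + 1) / ((M : ℝ) * C) with hadef
  set b : ℝ := ((M : ℝ) - (w : ℝ) + 1) / ((M : ℝ) * C) with hbdef
  have ha0 : 0 < a := by rw [hadef]; positivity
  have hb0 : 0 < b := by rw [hbdef]; apply div_pos (by linarith) (by positivity)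
  set A := Finset.univ.filter (fun q : Fin M → Bool => wt q = w + 1) with hAdef
  set B := Finset.univ.filter (fun q : Fin M → Bool => wt q + 1 = w) with hBdef
  have hdisj : Disjoint A B := by
    rw [Finset.disjoint_left]
    intro q hq hq'
    simp only [hAdef, hBdef, Finset.mem_filter] at hq hq'
    omega
  have hsum : (∑ q : Fin M → Bool, margQ M w q * Real.logb 2 (margQ M w q))
      = ∑ q ∈ A ∪ B, margQ M w q * Real.logb 2 (margQ M w q) := by
    refine (Finset.sum_subset (Finset.subset_univ _) ?_).symm
    intro q _ hq
    simp only [Finset.mem_union, hAdef, hBdef, Finset.mem_filter, Finset.mem_univ,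
      true_and, not_or] at hq
    rw [marg0 q hq.1 hq.2]
    simp
  have hAsum : (∑ q ∈ A, margQ M w q * Real.logb 2 (margQ M w q))
      = ((Nat.choose M (w + 1) : ℕ) : ℝ) * (a * Real.logb 2 a) := by
    have hcongr : ∀ q ∈ A, margQ M w q * Real.logb 2 (margQ M w q) = a * Real.logb 2 a := by
      intro q hq
      simp only [hAdef, Finset.mem_filter, Finset.mem_univ, true_and] at hq
      rw [margA q hq]
    rw [Finset.sum_congr rfl hcongr, Finset.sum_const, nsmul_eq_mul, hAdef, card_wt_eq]
  have hBsum : (∑ q ∈ B, margQ M w q * Real.logb 2 (margQ M w q))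
      = ((B.card : ℕ) : ℝ) * (b * Real.logb 2 b) := by
    have hcongr : ∀ q ∈ B, margQ M w q * Real.logb 2 (margQ M w q) = b * Real.logb 2 b := by
      intro q hq
      simp only [hBdef, Finset.mem_filter, Finset.mem_univ, true_and] at hq
      rw [margB q hq]
    rw [Finset.sum_congr rfl hcongr, Finset.sum_const, nsmul_eq_mul]
  have hA2 := cardA_identity M w hw
  have hB2 := cardB_identity M w hw
  have e1 : ((Nat.choose M (w + 1) : ℕ) : ℝ) * a = ((M : ℝ) - (w : ℝ)) / (M : ℝ) := by
    rw [hadef, mul_div_assoc', hA2]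
    field_simp
    rw [hCdef]
  have e2 : ((B.card : ℕ) : ℝ) * b = (w : ℝ) / (M : ℝ) := by
    rw [hbdef, mul_div_assoc', hB2]
    field_simp
    rw [hCdef]
  have la : Real.logb 2 a = Real.logb 2 ((w : ℝ) + 1) - Real.logb 2 (M : ℝ)
      - Real.logb 2 C := by
    rw [hadef, Real.logb_div (by positivity) (by positivity),
      Real.logb_mul (ne_of_gt hM0) (ne_of_gt hC0)]
    ring
  have lb : Real.logb 2 b = Real.logb 2 ((M : ℝ) - (w : ℝ) + 1) - Real.logb 2 (M : ℝ)
      - Real.logb 2 C := by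
    rw [hbdef, Real.logb_div (by linarith) (by positivity),
      Real.logb_mul (ne_of_gt hM0) (ne_of_gt hC0)]
    ring
  have hone : ((M : ℝ) - (w : ℝ)) / (M : ℝ) + (w : ℝ) / (M : ℝ) = 1 := by
    field_simp
    ring
  have hmain : (-∑ q : Fin M → Bool, margQ M w q * Real.logb 2 (margQ M w q))
      = Real.logb 2 (M : ℝ) + Real.logb 2 C
          - (((M : ℝ) - (w : ℝ)) / (M : ℝ)) * Real.logb 2 ((w : ℝ) + 1)
          - ((w : ℝ) / (M : ℝ)) * Real.logb 2 ((M : ℝ) - (w : ℝ) + 1) := by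
    rw [hsum, Finset.sum_union hdisj, hAsum, hBsum, la, lb]
    rw [show ((Nat.choose M (w + 1) : ℕ) : ℝ)
        * (a * (Real.logb 2 ((w : ℝ) + 1) - Real.logb 2 (M : ℝ) - Real.logb 2 C))
      = (((Nat.choose M (w + 1) : ℕ) : ℝ) * a)
        * (Real.logb 2 ((w : ℝ) + 1) - Real.logb 2 (M : ℝ) - Real.logb 2 C) by ring,
      show ((B.card : ℕ) : ℝ)
        * (b * (Real.logb 2 ((M : ℝ) - (w : ℝ) + 1) - Real.logb 2 (M : ℝ) - Real.logb 2 C))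
      = (((B.card : ℕ) : ℝ) * b)
        * (Real.logb 2 ((M : ℝ) - (w : ℝ) + 1) - Real.logb 2 (M : ℝ) - Real.logb 2 C) by ring,
      e1, e2]
    linear_combination (Real.logb 2 (M : ℝ) + Real.logb 2 C) * hone
  exact ⟨hmain, by linarith⟩
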